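/- For every α ∈ (0,1] there exist n ∈ ℕ, a map T : ℝ → ℝ^n (with the Euclidean norm on ℝ^n), and a constant A > 0 such that (1/A)·|s−t|^α ≤ ‖T(s)−T(t)‖ ≤ A·|s−t|^α for all s,t ∈ ℝ; that is, ℝ Hölder(α) embeds into the Euclidean space ℝ^n. -/

import Mathlib

noncomputable section
open Real

namespace HolderAux

/-- norm of difference of unit complex exponentials -/
lemma norm_exp_sub_exp (x y : ℝ) :
    ‖Complex.exp (x * Complex.I) - Complex.exp (y * Complex.I)‖
      = Real.sqrt (2 - 2 * Real.cos (x - y)) := by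
  rw [Complex.norm_def, Complex.normSq_apply]
  congr 1
  simp only [Complex.sub_re, Complex.sub_im, Complex.exp_ofReal_mul_I_re,
    Complex.exp_ofReal_mul_I_im]
  have hx := Real.sin_sq_add_cos_sq x
  have hy := Real.sin_sq_add_cos_sq y
  have := Real.cos_sub x y
  nlinarith [this]

lemma norm_exp_sub_exp_le (x y : ℝ) :
    ‖Complex.exp (x * Complex.I) - Complex.exp (y * Complex.I)‖ ≤ |x - y| := by
  rw [norm_exp_sub_exp]
  have h1 : 2 - 2 * Real.cos (x - y) ≤ (x - y) ^ 2 := by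
    nlinarith [Real.one_sub_sq_div_two_le_cos (x := x - y)]
  calc Real.sqrt (2 - 2 * Real.cos (x - y)) ≤ Real.sqrt ((x - y) ^ 2) :=
        Real.sqrt_le_sqrt h1
    _ = |x - y| := by rw [Real.sqrt_sq_eq_abs]

lemma norm_exp_sub_exp_le_two (x y : ℝ) :
    ‖Complex.exp (x * Complex.I) - Complex.exp (y * Complex.I)‖ ≤ 2 := by
  rw [norm_exp_sub_exp]
  have h1 : 2 - 2 * Real.cos (x - y) ≤ 4 := by
    nlinarith [Real.neg_one_le_cos (x - y)]
  calc Real.sqrt (2 - 2 * Real.cos (x - y)) ≤ Real.sqrt 4 := Real.sqrt_le_sqrt h1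
    _ = 2 := by
      rw [show (4:ℝ) = 2^2 by norm_num, Real.sqrt_sq (by norm_num)]

lemma norm_exp_sub_exp_ge (x y : ℝ) (h1 : 1 ≤ |x - y|) (h2 : |x - y| ≤ 2) :
    4/5 ≤ ‖Complex.exp (x * Complex.I) - Complex.exp (y * Complex.I)‖ := by
  rw [norm_exp_sub_exp]
  have hcos : Real.cos (x - y) ≤ 2/3 := by
    have : Real.cos (x - y) = Real.cos |x - y| := (Real.cos_abs (x-y)).symm
    rw [this]
    calc Real.cos |x - y| ≤ Real.cos 1 :=
          Real.cos_le_cos_of_nonneg_of_le_pi (by norm_num)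
            (h2.trans (by linarith [Real.pi_gt_three])) h1
      _ ≤ 2/3 := Real.cos_one_le.trans (by norm_num)
  have : (4/5:ℝ)^2 ≤ 2 - 2 * Real.cos (x - y) := by nlinarith
  calc (4/5 : ℝ) = Real.sqrt ((4/5)^2) := by
        rw [Real.sqrt_sq (by norm_num)]
    _ ≤ Real.sqrt (2 - 2 * Real.cos (x - y)) := Real.sqrt_le_sqrt this



lemma hasSum_int_abs_geom {d : ℝ} (h0 : 0 ≤ d) (h1 : d < 1) :
    HasSum (fun k : ℤ => d ^ k.natAbs) ((1 + d) / (1 - d)) := by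
  have hd : (1:ℝ) - d ≠ 0 := by linarith
  have hp : HasSum (fun n : ℕ => ((fun k : ℤ => d ^ k.natAbs) (n : ℤ))) (1/(1-d)) := by
    have he : (fun n : ℕ => ((fun k : ℤ => d ^ k.natAbs) (n : ℤ))) = fun n : ℕ => d ^ n := by
      funext n; simp
    rw [he, one_div]; exact hasSum_geometric_of_lt_one h0 h1
  have hn : HasSum (fun n : ℕ => ((fun k : ℤ => d ^ k.natAbs) (-((n:ℤ) + 1)))) (d * (1-d)⁻¹) := by
    have he : (fun n : ℕ => ((fun k : ℤ => d ^ k.natAbs) (-((n:ℤ) + 1)))) = fun n : ℕ => d * d ^ n := by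
      funext n
      have h2 : ((-((n : ℤ)+1)).natAbs) = n + 1 := by omega
      simp only [h2, pow_succ]
      ring
    rw [he]
    exact (hasSum_geometric_of_lt_one h0 h1).mul_left d
  have h3 := HasSum.of_nat_of_neg_add_one (f := fun k : ℤ => d ^ k.natAbs) hp hn
  convert h3 using 1
  field_simp


lemma summable_int_abs_geom {d : ℝ} (h0 : 0 ≤ d) (h1 : d < 1) :
    Summable (fun k : ℤ => d ^ k.natAbs) :=
  (hasSum_int_abs_geom h0 h1).summable

/-- comparison summability over ℤ -/
lemma summable_of_decay {E : Type*} [NormedAddCommGroup E] [CompleteSpace E] {g : ℤ → E} {C d : ℝ}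
    (h0 : 0 ≤ d) (h1 : d < 1) (h : ∀ k : ℤ, ‖g k‖ ≤ C * d ^ k.natAbs) :
    Summable g := by
  exact Summable.of_norm_bounded
    ((summable_int_abs_geom h0 h1).mul_left C) h

lemma tsum_norm_le_of_decay {g : ℤ → ℝ} {C d : ℝ} (hC : 0 ≤ C)
    (h0 : 0 ≤ d) (h1 : d < 1) (hnn : ∀ k, 0 ≤ g k)
    (h : ∀ k : ℤ, g k ≤ C * d ^ k.natAbs) :
    ∑' k : ℤ, g k ≤ C * ((1 + d) / (1 - d)) := by
  have hs : Summable g := by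
    apply summable_of_decay h0 h1 (g := g) (C := C)
    intro k
    rw [Real.norm_eq_abs, abs_of_nonneg (hnn k)]
    exact h k
  calc ∑' k : ℤ, g k ≤ ∑' k : ℤ, C * d ^ k.natAbs :=
        Summable.tsum_le_tsum h hs ((summable_int_abs_geom h0 h1).mul_left C)
    _ = C * ((1 + d) / (1 - d)) := ((hasSum_int_abs_geom h0 h1).mul_left C).tsum_eq



def aj (α : ℝ) (j : ℤ) : ℝ := (2:ℝ) ^ ((j:ℝ) * α)
def bj (j : ℤ) : ℝ := (2:ℝ) ^ (-(j:ℝ))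
def fj (α : ℝ) (j : ℤ) (t : ℝ) : ℂ :=
  ((aj α j : ℝ) : ℂ) * (Complex.exp (((t * bj j : ℝ) : ℂ) * Complex.I) - 1)

lemma aj_pos (α : ℝ) (j : ℤ) : 0 < aj α j := Real.rpow_pos_of_pos (by norm_num) _
lemma bj_pos (j : ℤ) : 0 < bj j := Real.rpow_pos_of_pos (by norm_num) _

lemma fj_sub (α : ℝ) (j : ℤ) (s t : ℝ) :
    fj α j s - fj α j t
      = ((aj α j : ℝ) : ℂ) * (Complex.exp (((s * bj j : ℝ) : ℂ) * Complex.I)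
          - Complex.exp (((t * bj j : ℝ) : ℂ) * Complex.I)) := by
  unfold fj; ring

lemma norm_fj_sub (α : ℝ) (j : ℤ) (s t : ℝ) :
    ‖fj α j s - fj α j t‖
      = aj α j * ‖Complex.exp (((s * bj j : ℝ) : ℂ) * Complex.I)
          - Complex.exp (((t * bj j : ℝ) : ℂ) * Complex.I)‖ := by
  rw [fj_sub, norm_mul, Complex.norm_real, Real.norm_eq_abs,
    abs_of_pos (aj_pos α j)]

lemma norm_fj_sub_le_fine (α : ℝ) (j : ℤ) (s t : ℝ) :
    ‖fj α j s - fj α j t‖ ≤ |s - t| * (aj α j * bj j) := by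
  rw [norm_fj_sub]
  have h := norm_exp_sub_exp_le (s * bj j) (t * bj j)
  have h2 : |s * bj j - t * bj j| = |s - t| * bj j := by
    rw [← sub_mul, abs_mul, abs_of_pos (bj_pos j)]
  calc aj α j * ‖_ - _‖ ≤ aj α j * (|s - t| * bj j) := by
        exact mul_le_mul_of_nonneg_left (h2 ▸ h) (aj_pos α j).le
    _ = |s - t| * (aj α j * bj j) := by ring

lemma norm_fj_sub_le_coarse (α : ℝ) (j : ℤ) (s t : ℝ) :
    ‖fj α j s - fj α j t‖ ≤ 2 * aj α j := by
  rw [norm_fj_sub]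
  calc aj α j * ‖_ - _‖ ≤ aj α j * 2 :=
        mul_le_mul_of_nonneg_left (norm_exp_sub_exp_le_two _ _) (aj_pos α j).le
    _ = 2 * aj α j := by ring

lemma fj_zero (α : ℝ) (j : ℤ) : fj α j 0 = 0 := by
  simp [fj]

lemma norm_fj_le_fine (α : ℝ) (j : ℤ) (t : ℝ) :
    ‖fj α j t‖ ≤ |t| * (aj α j * bj j) := by
  have := norm_fj_sub_le_fine α j t 0
  simpa [fj_zero] using this

lemma norm_fj_le_coarse (α : ℝ) (j : ℤ) (t : ℝ) :
    ‖fj α j t‖ ≤ 2 * aj α j := by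
  have := norm_fj_sub_le_coarse α j t 0
  simpa [fj_zero] using this



lemma rpow_neg_le_pow (β α' : ℝ) (hβ : β ≤ α') (n : ℕ) :
    (2:ℝ) ^ (-((n:ℝ) * α')) ≤ ((2:ℝ) ^ (-β)) ^ n := by
  have h1 : ((2:ℝ) ^ (-β)) ^ n = (2:ℝ) ^ (-β * (n:ℝ)) := by
    rw [← Real.rpow_natCast ((2:ℝ) ^ (-β)) n, ← Real.rpow_mul (by norm_num)]
  rw [h1]
  apply Real.rpow_le_rpow_of_exponent_le (by norm_num)
  have h2 : (0:ℝ) ≤ (n:ℝ) := Nat.cast_nonneg n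
  nlinarith

lemma two_rpow_add (x y : ℝ) : (2:ℝ) ^ (x + y) = (2:ℝ) ^ x * (2:ℝ) ^ y :=
  Real.rpow_add (by norm_num) x y

/-- The central decay estimate. -/
lemma decay {α : ℝ} (hα0 : 0 < α) (hα1 : α ≤ 1) (j j₀ : ℤ) {v : ℝ} (hv : 0 < v)
    (hl : (2:ℝ) ^ ((j₀:ℝ)) ≤ v) (hu : v < 2 ^ ((j₀:ℝ) + 1)) (s t : ℝ) (hst : |s - t| = v) :
    ‖fj α j s - fj α j t‖
      ≤ 2 * v ^ α * ((2:ℝ) ^ (-(min α (1-α)))) ^ (j - j₀).natAbs := by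
  set β := min α (1 - α) with hβdef
  have hβα : β ≤ α := min_le_left _ _
  have hβα' : β ≤ 1 - α := min_le_right _ _
  rcases le_or_gt j j₀ with hj | hj
  · -- coarse scales
    set n : ℕ := (j - j₀).natAbs with hn
    have hjn : (j:ℝ) = (j₀:ℝ) - (n:ℝ) := by
      have h0 : (j - j₀ : ℤ) = -(n:ℤ) := by omega
      have h1 := congrArg (fun z : ℤ => (z:ℝ)) h0
      push_cast at h1
      linarith
    have key : aj α j ≤ v ^ α * ((2:ℝ) ^ (-β)) ^ n := by
      have e1 : aj α j = (2:ℝ) ^ ((j₀:ℝ) * α) * (2:ℝ) ^ (-((n:ℝ) * α)) := by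
        simp only [aj]
        rw [hjn, ← two_rpow_add]
        congr 1; ring
      have e2 : (2:ℝ) ^ ((j₀:ℝ) * α) ≤ v ^ α := by
        rw [Real.rpow_mul (by norm_num)]
        exact Real.rpow_le_rpow (by positivity) hl hα0.le
      have e3 : (2:ℝ) ^ (-((n:ℝ) * α)) ≤ ((2:ℝ) ^ (-β)) ^ n :=
        rpow_neg_le_pow β α hβα n
      rw [e1]
      exact mul_le_mul e2 e3 (by positivity) (by positivity)
    calc ‖fj α j s - fj α j t‖ ≤ 2 * aj α j := norm_fj_sub_le_coarse α j s t
      _ ≤ 2 * (v ^ α * ((2:ℝ) ^ (-β)) ^ n) := by linarith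
      _ = 2 * v ^ α * ((2:ℝ) ^ (-β)) ^ n := by ring
  · -- fine scales
    set n : ℕ := (j - j₀).natAbs with hn
    have hjn : (j:ℝ) = (j₀:ℝ) + (n:ℝ) := by
      have h0 : (j - j₀ : ℤ) = (n:ℤ) := by omega
      have h1 := congrArg (fun z : ℤ => (z:ℝ)) h0
      push_cast at h1
      linarith
    have habj : aj α j * bj j = (2:ℝ) ^ ((j:ℝ) * (α - 1)) := by
      simp only [aj, bj]
      rw [← two_rpow_add]
      congr 1; ring
    have e1 : (2:ℝ) ^ ((j:ℝ) * (α - 1))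
        = (2:ℝ) ^ ((j₀:ℝ) * (α - 1)) * (2:ℝ) ^ (-((n:ℝ) * (1 - α))) := by
      rw [hjn, ← two_rpow_add]
      congr 1; ring
    have e2 : (2:ℝ) ^ ((j₀:ℝ) * (α - 1)) ≤ (v / 2) ^ (α - 1) := by
      rw [Real.rpow_mul (by norm_num)]
      apply Real.rpow_le_rpow_of_nonpos (by positivity) _ (by linarith)
      rw [div_le_iff₀ (by norm_num)]
      have h9 : (2:ℝ) ^ ((j₀:ℝ) + 1) = 2 ^ ((j₀:ℝ)) * 2 := by
        rw [two_rpow_add, Real.rpow_one]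
      linarith [hu.le, h9]
    have e3 : (2:ℝ) ^ (-((n:ℝ) * (1 - α))) ≤ ((2:ℝ) ^ (-β)) ^ n :=
      rpow_neg_le_pow β (1 - α) hβα' n
    have hva : v * v ^ (α - 1) = v ^ α := by
      have h0 : v ^ α = v ^ ((1:ℝ) + (α - 1)) := by norm_num
      rw [h0, Real.rpow_add hv, Real.rpow_one]
    have e4 : v * (v/2) ^ (α-1) ≤ 2 * v ^ α := by
      have h2a : (1:ℝ) ≤ 2 * (2:ℝ) ^ (α - 1) := by
        have e : (2:ℝ) * (2:ℝ) ^ (α-1) = (2:ℝ) ^ α := by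
          nth_rewrite 1 [show (2:ℝ) = (2:ℝ) ^ (1:ℝ) from (Real.rpow_one 2).symm]
          rw [← two_rpow_add]; congr 1; ring
        rw [e]
        have h3 : (2:ℝ) ^ (0:ℝ) ≤ (2:ℝ) ^ α :=
          Real.rpow_le_rpow_of_exponent_le one_le_two hα0.le
        rwa [Real.rpow_zero] at h3
      have h5 : v * (v/2) ^ (α-1) = v ^ α / (2:ℝ) ^ (α-1) := by
        rw [Real.div_rpow hv.le (by norm_num), ← hva]; ring
      rw [h5, div_le_iff₀ (by positivity)]
      nlinarith [Real.rpow_pos_of_pos hv α,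
        Real.rpow_pos_of_pos (show (0:ℝ)<2 by norm_num) (α-1)]
    calc ‖fj α j s - fj α j t‖ ≤ |s - t| * (aj α j * bj j) := norm_fj_sub_le_fine α j s t
      _ = v * ((2:ℝ) ^ ((j₀:ℝ) * (α - 1)) * (2:ℝ) ^ (-((n:ℝ) * (1 - α)))) := by
          rw [hst, habj, e1]
      _ ≤ v * ((v/2) ^ (α-1) * ((2:ℝ) ^ (-β)) ^ n) := by
          apply mul_le_mul_of_nonneg_left _ hv.le
          exact mul_le_mul e2 e3 (by positivity) (by positivity)
      _ = (v * (v/2) ^ (α-1)) * ((2:ℝ) ^ (-β)) ^ n := by ring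
      _ ≤ (2 * v ^ α) * ((2:ℝ) ^ (-β)) ^ n := by
          apply mul_le_mul_of_nonneg_right e4 (by positivity)
      _ = 2 * v ^ α * ((2:ℝ) ^ (-β)) ^ n := by ring



lemma two_rpow_mul_neg (x : ℝ) : (2:ℝ) ^ x * (2:ℝ) ^ (-x) = 1 := by
  rw [← two_rpow_add]; simp

/-- Lower bound for the main term. -/
lemma main_term_lower {α : ℝ} (hα0 : 0 < α) (hα1 : α ≤ 1) (j₀ : ℤ) {v : ℝ} (hv : 0 < v)
    (hl : (2:ℝ) ^ ((j₀:ℝ)) ≤ v) (hu : v < 2 ^ ((j₀:ℝ) + 1)) (s t : ℝ) (hst : |s - t| = v) :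
    (2/5) * v ^ α ≤ ‖fj α j₀ s - fj α j₀ t‖ := by
  rw [norm_fj_sub]
  have hb : bj j₀ = (2:ℝ) ^ (-(j₀:ℝ)) := rfl
  have hbpos := bj_pos j₀
  have hphase : |s * bj j₀ - t * bj j₀| = v * bj j₀ := by
    rw [← sub_mul, abs_mul, hst, abs_of_pos hbpos]
  have hone : (1:ℝ) ≤ v * bj j₀ := by
    have := mul_le_mul_of_nonneg_right hl hbpos.le
    rwa [hb, two_rpow_mul_neg] at this
  have htwo : v * bj j₀ ≤ 2 := by
    have h1 := mul_le_mul_of_nonneg_right hu.le hbpos.le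
    have h2 : (2:ℝ) ^ ((j₀:ℝ) + 1) * bj j₀ = 2 := by
      rw [hb, two_rpow_add, Real.rpow_one, mul_comm ((2:ℝ)^((j₀:ℝ))) 2, mul_assoc,
        two_rpow_mul_neg]
      ring
    linarith
  have hexp : 4/5 ≤ ‖Complex.exp (((s * bj j₀ : ℝ) : ℂ) * Complex.I)
      - Complex.exp (((t * bj j₀ : ℝ) : ℂ) * Complex.I)‖ := by
    apply norm_exp_sub_exp_ge _ _ (by rw [hphase]; exact hone) (by rw [hphase]; exact htwo)
  have haj : v ^ α / 2 ≤ aj α j₀ := by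
    have h1 : v / 2 ≤ (2:ℝ) ^ ((j₀:ℝ)) := by
      have h9 : (2:ℝ) ^ ((j₀:ℝ) + 1) = 2 ^ ((j₀:ℝ)) * 2 := by
        rw [two_rpow_add, Real.rpow_one]
      rw [div_le_iff₀ (by norm_num)]
      linarith [hu.le, h9]
    have h2 : (v/2) ^ α ≤ aj α j₀ := by
      have : aj α j₀ = ((2:ℝ) ^ ((j₀:ℝ))) ^ α := by
        simp only [aj]; rw [← Real.rpow_mul (by norm_num)]
      rw [this]
      exact Real.rpow_le_rpow (by positivity) h1 hα0.le
    have h3 : v ^ α / 2 ≤ (v/2) ^ α := by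
      rw [Real.div_rpow hv.le (by norm_num)]
      apply div_le_div_of_nonneg_left (by positivity) (by positivity)
      calc (2:ℝ) ^ α ≤ (2:ℝ) ^ (1:ℝ) :=
            Real.rpow_le_rpow_of_exponent_le one_le_two hα1
        _ = 2 := Real.rpow_one 2
    linarith
  calc (2/5) * v ^ α = (v ^ α / 2) * (4/5) := by ring
    _ ≤ aj α j₀ * ‖_ - _‖ := by
        apply mul_le_mul haj hexp (by norm_num) (aj_pos α j₀).le

/-- shifted geometric bound -/
lemma pow_natAbs_shift {c : ℝ} (hc0 : 0 < c) (hc1 : c ≤ 1) (a b : ℤ) :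
    c ^ (a + b).natAbs ≤ (c ^ a.natAbs)⁻¹ * c ^ b.natAbs := by
  rw [le_inv_mul_iff₀ (by positivity), ← pow_add]
  apply pow_le_pow_of_le_one hc0.le hc1
  omega

/-- bound for `fj` centered at scale 0 -/
lemma norm_fj_le_center {α : ℝ} (hα0 : 0 < α) (hα1 : α ≤ 1) (j : ℤ) (t : ℝ) :
    ‖fj α j t‖ ≤ (2 + |t|) * ((2:ℝ) ^ (-(min α (1-α)))) ^ j.natAbs := by
  set β := min α (1 - α) with hβdef
  have hβα : β ≤ α := min_le_left _ _
  have hβα' : β ≤ 1 - α := min_le_right _ _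
  rcases le_or_gt j 0 with hj | hj
  · set n : ℕ := j.natAbs with hn
    have hjn : (j:ℝ) = -(n:ℝ) := by
      have h0 : (j : ℤ) = -(n:ℤ) := by omega
      have h1 := congrArg (fun z : ℤ => (z:ℝ)) h0
      push_cast at h1
      linarith
    have key : aj α j ≤ ((2:ℝ) ^ (-β)) ^ n := by
      have e1 : aj α j = (2:ℝ) ^ (-((n:ℝ) * α)) := by
        simp only [aj]; rw [hjn]; congr 1; ring
      rw [e1]
      exact rpow_neg_le_pow β α hβα n
    calc ‖fj α j t‖ ≤ 2 * aj α j := norm_fj_le_coarse α j t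
      _ ≤ 2 * ((2:ℝ) ^ (-β)) ^ n := by linarith
      _ ≤ (2 + |t|) * ((2:ℝ) ^ (-β)) ^ n := by
          apply mul_le_mul_of_nonneg_right (by linarith [abs_nonneg t]) (by positivity)
  · set n : ℕ := j.natAbs with hn
    have hjn : (j:ℝ) = (n:ℝ) := by
      have h0 : (j : ℤ) = (n:ℤ) := by omega
      exact_mod_cast congrArg (fun z : ℤ => (z:ℝ)) h0
    have key : aj α j * bj j ≤ ((2:ℝ) ^ (-β)) ^ n := by
      have e1 : aj α j * bj j = (2:ℝ) ^ (-((n:ℝ) * (1 - α))) := by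
        simp only [aj, bj]; rw [← two_rpow_add, hjn]; congr 1; ring
      rw [e1]
      exact rpow_neg_le_pow β (1-α) hβα' n
    calc ‖fj α j t‖ ≤ |t| * (aj α j * bj j) := norm_fj_le_fine α j t
      _ ≤ |t| * ((2:ℝ) ^ (-β)) ^ n := by
          apply mul_le_mul_of_nonneg_left key (abs_nonneg t)
      _ ≤ (2 + |t|) * ((2:ℝ) ^ (-β)) ^ n := by
          apply mul_le_mul_of_nonneg_right (by linarith [abs_nonneg t]) (by positivity)



lemma hasSum_shift_geom {c : ℝ} (hc0 : 0 ≤ c) (hc1 : c < 1) (j₀ : ℤ) :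
    HasSum (fun j : ℤ => c ^ (j - j₀).natAbs) ((1+c)/(1-c)) := by
  have h := hasSum_int_abs_geom hc0 hc1
  have h2 := ((Equiv.subRight j₀).hasSum_iff
    (f := fun k : ℤ => c ^ k.natAbs) (a := (1+c)/(1-c))).mpr h
  simpa [Function.comp_def, Equiv.subRight] using h2

/-- summability along an arithmetic progression, from geometric decay about `j₀`. -/
lemma summable_row {E : Type*} [NormedAddCommGroup E] [CompleteSpace E] {g : ℤ → E} {C c : ℝ}
    (hc0 : 0 < c) (hc1 : c < 1) {K : ℕ} (hK : 1 ≤ K) (i j₀ : ℤ)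
    (h : ∀ j, ‖g j‖ ≤ C * c ^ (j - j₀).natAbs) :
    Summable (fun m : ℤ => g (i + K*m)) := by
  have hC : 0 ≤ C := by
    have := (norm_nonneg (g j₀)).trans (h j₀)
    simpa using this
  apply summable_of_decay (C := C * (c ^ (i - j₀).natAbs)⁻¹) (d := c^K) (by positivity)
    (pow_lt_one₀ hc0.le hc1 (by omega))
  intro m
  calc ‖g (i + K*m)‖ ≤ C * c ^ ((i + K*m) - j₀).natAbs := h _
    _ ≤ C * ((c ^ (i-j₀).natAbs)⁻¹ * c ^ ((K:ℤ)*m).natAbs) := by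
        have h2 : ((i + K*m) - j₀) = (i - j₀) + (K:ℤ)*m := by ring
        rw [h2]
        exact mul_le_mul_of_nonneg_left (pow_natAbs_shift hc0 hc1.le _ _) hC
    _ = C * (c ^ (i-j₀).natAbs)⁻¹ * (c^K) ^ m.natAbs := by
        rw [Int.natAbs_mul, Int.natAbs_natCast, pow_mul]
        ring

lemma summable_row_norm {g : ℤ → ℂ} {C c : ℝ}
    (hc0 : 0 < c) (hc1 : c < 1) {K : ℕ} (hK : 1 ≤ K) (i j₀ : ℤ)
    (h : ∀ j, ‖g j‖ ≤ C * c ^ (j - j₀).natAbs) :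
    Summable (fun m : ℤ => ‖g (i + K*m)‖) := by
  rw [summable_norm_iff]
  exact summable_row hc0 hc1 hK i j₀ h

lemma tsum_row_norm_le {g : ℤ → ℂ} {C c : ℝ} (hC : 0 ≤ C)
    (hc0 : 0 < c) (hc1 : c < 1) {K : ℕ} (hK : 1 ≤ K) (i j₀ : ℤ)
    (h : ∀ j, ‖g j‖ ≤ C * c ^ (j - j₀).natAbs) :
    ∑' m : ℤ, ‖g (i + K*m)‖ ≤ C * ((1+c)/(1-c)) := by
  have hinj : Function.Injective (fun m : ℤ => i + (K:ℤ)*m) := by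
    intro m m' hmm
    simp only at hmm
    have h1 : (K:ℤ) * m = (K:ℤ) * m' := by omega
    have h2 : (K:ℤ) ≠ 0 := by exact_mod_cast Nat.one_le_iff_ne_zero.mp hK
    exact mul_left_cancel₀ h2 h1
  have hsum2 : Summable (fun j : ℤ => C * c ^ (j - j₀).natAbs) :=
    ((hasSum_shift_geom hc0.le hc1 j₀).mul_left C).summable
  calc ∑' m : ℤ, ‖g (i + K*m)‖ ≤ ∑' j : ℤ, C * c ^ (j - j₀).natAbs := by
        apply Summable.tsum_le_tsum_of_inj (fun m : ℤ => i + (K:ℤ)*m) hinj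
          (fun j _ => by positivity) (fun m => h _)
          (summable_row_norm hc0 hc1 hK i j₀ h) hsum2
    _ = C * ((1+c)/(1-c)) := ((hasSum_shift_geom hc0.le hc1 j₀).mul_left C).tsum_eq



set_option maxHeartbeats 2000000 in
theorem aux_embed {α : ℝ} (hα0 : 0 < α) (hα1 : α < 1) :
    ∃ (K : ℕ) (T : ℝ → EuclideanSpace ℝ (Fin K × Bool)) (A : ℝ), 0 < A ∧
      ∀ s t : ℝ, (1/A) * |s - t| ^ α ≤ ‖T s - T t‖ ∧ ‖T s - T t‖ ≤ A * |s - t| ^ α := by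
  set β := min α (1-α) with hβdef
  have hβ0 : 0 < β := lt_min hα0 (by linarith)
  set c := (2:ℝ) ^ (-β) with hcdef
  have hc0 : 0 < c := Real.rpow_pos_of_pos (by norm_num) _
  have hc1 : c < 1 := Real.rpow_lt_one_of_one_lt_of_neg one_lt_two (by linarith)
  obtain ⟨K₀, hK₀⟩ := exists_pow_lt_of_lt_one (show (0:ℝ) < 1/100 by norm_num) hc1
  set K := K₀ + 1 with hKdef
  have hK1 : 1 ≤ K := Nat.le_add_left 1 K₀
  set d := c ^ K with hddef
  have hd0 : 0 < d := pow_pos hc0 K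
  have hd1 : d < 1 := pow_lt_one₀ hc0.le hc1 (by omega)
  have hd100 : d ≤ 1/100 := by
    have h9 : c ^ K ≤ c ^ K₀ := pow_le_pow_of_le_one hc0.le hc1.le (by omega)
    rw [hddef]
    linarith [hK₀]
  have hc2 : 0 < 1 - c := by linarith
  set ps : ℝ → Fin K → ℂ := fun r i => ∑' m : ℤ, fj α (((i:ℕ):ℤ) + K*m) r with hpsdef
  set T : ℝ → EuclideanSpace ℝ (Fin K × Bool) :=
    fun r => WithLp.toLp 2 (fun p : Fin K × Bool => if p.2 then (ps r p.1).im else (ps r p.1).re) with hTdef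
  set A : ℝ := 3 + 4*K/(1-c) with hAdef
  have hA3 : 3 ≤ A := by
    rw [hAdef]
    have : 0 ≤ 4*(K:ℝ)/(1-c) := by positivity
    linarith
  have hA0 : 0 < A := by linarith
  refine ⟨K, T, A, hA0, ?_⟩
  intro s t
  -- summability of the rows defining `ps`
  have hsrow : ∀ (r : ℝ) (i : ℤ), Summable (fun m : ℤ => fj α (i + K*m) r) := by
    intro r i
    apply summable_row (g := fun j : ℤ => fj α j r) hc0 hc1 hK1 i 0 (C := 2 + |r|)
    intro j
    simpa using norm_fj_le_center hα0 hα1.le j r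
  have hD : ∀ i : Fin K, ps s i - ps t i
      = ∑' m : ℤ, (fj α (((i:ℕ):ℤ) + K*m) s - fj α (((i:ℕ):ℤ) + K*m) t) := by
    intro i
    rw [hpsdef]
    exact (Summable.tsum_sub (hsrow s _) (hsrow t _)).symm
  -- the Euclidean norm in terms of the complex coordinates
  have hTsub : ∀ p : Fin K × Bool,
      (T s - T t) p = if p.2 then (ps s p.1 - ps t p.1).im else (ps s p.1 - ps t p.1).re := by
    intro p
    rw [PiLp.sub_apply, hTdef]
    rcases p with ⟨i, b⟩
    cases b <;> simp [Complex.sub_re, Complex.sub_im]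
  have hnorm : ‖T s - T t‖ = Real.sqrt (∑ i : Fin K, ‖ps s i - ps t i‖^2) := by
    rw [EuclideanSpace.norm_eq]
    congr 1
    rw [Fintype.sum_prod_type]
    apply Finset.sum_congr rfl
    intro i _
    have e1 : (T s - T t) (i, true) = (ps s i - ps t i).im := by rw [hTsub]; simp
    have e2 : (T s - T t) (i, false) = (ps s i - ps t i).re := by rw [hTsub]; simp
    rw [Fintype.sum_bool, e1, e2, Real.norm_eq_abs, Real.norm_eq_abs, sq_abs, sq_abs,
      Complex.sq_norm, Complex.normSq_apply]
    ring
  by_cases hst : s = t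
  · subst hst
    simp only [sub_self, norm_zero, abs_zero]
    rw [Real.zero_rpow hα0.ne']
    constructor <;> simp
  -- main case
  set v := |s - t| with hvdef
  have hv : 0 < v := abs_pos.mpr (sub_ne_zero.mpr hst)
  set j₀ : ℤ := Int.floor (Real.logb 2 v) with hj₀def
  have hl : (2:ℝ) ^ ((j₀:ℝ)) ≤ v := by
    have h1 : ((j₀:ℝ)) ≤ Real.logb 2 v := Int.floor_le _
    calc (2:ℝ) ^ ((j₀:ℝ)) ≤ (2:ℝ) ^ (Real.logb 2 v) :=
          Real.rpow_le_rpow_of_exponent_le one_le_two h1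
      _ = v := Real.rpow_logb (by norm_num) (by norm_num) hv
  have hu : v < (2:ℝ) ^ ((j₀:ℝ) + 1) := by
    have h1 : Real.logb 2 v < (j₀:ℝ) + 1 := Int.lt_floor_add_one _
    calc v = (2:ℝ) ^ (Real.logb 2 v) := (Real.rpow_logb (by norm_num) (by norm_num) hv).symm
      _ < (2:ℝ) ^ ((j₀:ℝ) + 1) := Real.rpow_lt_rpow_of_exponent_lt one_lt_two h1
  have hvap : (0:ℝ) < v ^ α := Real.rpow_pos_of_pos hv α
  have hdecay : ∀ j : ℤ, ‖fj α j s - fj α j t‖ ≤ (2 * v ^ α) * c ^ (j - j₀).natAbs := by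
    intro j
    exact decay hα0 hα1.le j j₀ hv hl hu s t hvdef.symm
  have hzrow : ∀ i : ℤ,
      Summable (fun m : ℤ => fj α (i + K*m) s - fj α (i + K*m) t) :=
    fun i => summable_row (g := fun j : ℤ => fj α j s - fj α j t) hc0 hc1 hK1 i j₀ hdecay
  have hzrown : ∀ i : ℤ,
      Summable (fun m : ℤ => ‖fj α (i + K*m) s - fj α (i + K*m) t‖) :=
    fun i => summable_row_norm (g := fun j : ℤ => fj α j s - fj α j t) hc0 hc1 hK1 i j₀ hdecay
  -- per coordinate upper bound
  have hDub : ∀ i : Fin K, ‖ps s i - ps t i‖ ≤ (2 * v ^ α) * ((1+c)/(1-c)) := by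
    intro i
    rw [hD i]
    calc ‖∑' m : ℤ, (fj α (((i:ℕ):ℤ) + K*m) s - fj α (((i:ℕ):ℤ) + K*m) t)‖
        ≤ ∑' m : ℤ, ‖fj α (((i:ℕ):ℤ) + K*m) s - fj α (((i:ℕ):ℤ) + K*m) t‖ :=
          norm_tsum_le_tsum_norm (hzrown _)
      _ ≤ (2 * v ^ α) * ((1+c)/(1-c)) :=
          tsum_row_norm_le (g := fun j : ℤ => fj α j s - fj α j t) (by positivity) hc0 hc1 hK1 _ j₀ hdecay
  -- global upper bound
  have hub : ‖T s - T t‖ ≤ A * v ^ α := by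
    rw [hnorm]
    have h1 : ∑ i : Fin K, ‖ps s i - ps t i‖^2 ≤ (∑ i : Fin K, ‖ps s i - ps t i‖)^2 :=
      Finset.sum_sq_le_sq_sum_of_nonneg (fun i _ => norm_nonneg _)
    have h3 : (1+c)/(1-c) ≤ 2/(1-c) := by
      rw [div_le_div_iff₀ hc2 hc2]
      nlinarith
    calc Real.sqrt (∑ i : Fin K, ‖ps s i - ps t i‖^2)
        ≤ Real.sqrt ((∑ i : Fin K, ‖ps s i - ps t i‖)^2) := Real.sqrt_le_sqrt h1
      _ = ∑ i : Fin K, ‖ps s i - ps t i‖ :=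
          Real.sqrt_sq (Finset.sum_nonneg (fun i _ => norm_nonneg _))
      _ ≤ ∑ _i : Fin K, (2 * v ^ α) * ((1+c)/(1-c)) :=
          Finset.sum_le_sum (fun i _ => hDub i)
      _ = K * ((2 * v ^ α) * ((1+c)/(1-c))) := by
          rw [Finset.sum_const, Finset.card_univ, Fintype.card_fin, nsmul_eq_mul]
      _ ≤ K * ((2 * v ^ α) * (2/(1-c))) := by
          apply mul_le_mul_of_nonneg_left
            (mul_le_mul_of_nonneg_left h3 (by positivity)) (Nat.cast_nonneg K)
      _ = (4*K/(1-c)) * v ^ α := by field_simp; ring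
      _ ≤ A * v ^ α := by nlinarith
  -- the distinguished coordinate
  have hKz : (0:ℤ) < (K:ℤ) := by exact_mod_cast hK1
  have hem := Int.emod_nonneg j₀ (by omega : (K:ℤ) ≠ 0)
  have hem2 := Int.emod_lt_of_pos j₀ hKz
  set i₀ : Fin K := ⟨(j₀ % (K:ℤ)).toNat, by omega⟩ with hi₀def
  set m₀ : ℤ := j₀ / (K:ℤ) with hm₀def
  have hi₀ : ((i₀:ℕ):ℤ) + (K:ℤ)*m₀ = j₀ := by
    have h1 : ((i₀:ℕ):ℤ) = j₀ % (K:ℤ) := by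
      rw [hi₀def]
      simp [Int.toNat_of_nonneg hem]
    rw [h1, hm₀def]
    exact Int.emod_add_mul_ediv j₀ (K:ℤ)
  set Zf : ℤ → ℂ := fun m => fj α (((i₀:ℕ):ℤ) + K*m) s - fj α (((i₀:ℕ):ℤ) + K*m) t
    with hZfdef
  have hZsum : Summable Zf := hzrow _
  have hsplit := Summable.tsum_eq_add_tsum_ite hZsum m₀
  set R : ℂ := ∑' m : ℤ, ite (m = m₀) 0 (Zf m) with hRdef
  -- decay of Zf about m₀ in units of d
  have hZd : ∀ m : ℤ, ‖Zf m‖ ≤ (2 * v ^ α) * d ^ (m - m₀).natAbs := by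
    intro m
    have h1 := hdecay (((i₀:ℕ):ℤ) + K*m)
    have h2 : ((((i₀:ℕ):ℤ) + K*m) - j₀) = (K:ℤ) * (m - m₀) := by
      rw [← hi₀]; ring
    rw [h2] at h1
    rw [Int.natAbs_mul, Int.natAbs_natCast, pow_mul] at h1
    rw [hddef]
    exact h1
  have hgs : Summable (fun m : ℤ => (2 * v ^ α) * d ^ (m - m₀).natAbs) :=
    ((hasSum_shift_geom hd0.le hd1 m₀).mul_left _).summable
  have hWn : ∀ m : ℤ, ‖ite (m = m₀) (0:ℂ) (Zf m)‖
      ≤ ite (m = m₀) 0 ((2 * v ^ α) * d ^ (m - m₀).natAbs) := by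
    intro m
    by_cases hm : m = m₀
    · simp [hm]
    · rw [if_neg hm, if_neg hm]
      exact hZd m
  have hWsum : Summable (fun m : ℤ => ite (m = m₀) (0:ℝ) ((2 * v ^ α) * d ^ (m - m₀).natAbs)) := by
    apply Summable.of_nonneg_of_le _ _ hgs
    · intro m; by_cases hm : m = m₀ <;> simp [hm]; positivity
    · intro m; by_cases hm : m = m₀ <;> simp [hm]; positivity
  have hitesum : Summable (fun m : ℤ => ‖ite (m = m₀) (0:ℂ) (Zf m)‖) := by
    apply Summable.of_nonneg_of_le (fun m => norm_nonneg _) hWn hWsum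
  have hRn : ‖R‖ ≤ (2 * v ^ α) * ((1+d)/(1-d)) - 2 * v ^ α := by
    have h1 : ‖R‖ ≤ ∑' m : ℤ, ‖ite (m = m₀) (0:ℂ) (Zf m)‖ := by
      rw [hRdef]
      exact norm_tsum_le_tsum_norm hitesum
    have h2 : ∑' m : ℤ, ‖ite (m = m₀) (0:ℂ) (Zf m)‖
        ≤ ∑' m : ℤ, ite (m = m₀) (0:ℝ) ((2 * v ^ α) * d ^ (m - m₀).natAbs) :=
      Summable.tsum_le_tsum hWn hitesum hWsum
    have h3 := Summable.tsum_eq_add_tsum_ite hgs m₀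
    have h4 : (2 * v ^ α) * d ^ (m₀ - m₀).natAbs = 2 * v ^ α := by simp
    have h5 : ∑' m : ℤ, (2 * v ^ α) * d ^ (m - m₀).natAbs
        = (2 * v ^ α) * ((1+d)/(1-d)) :=
      ((hasSum_shift_geom hd0.le hd1 m₀).mul_left _).tsum_eq
    rw [h4] at h3
    rw [h5] at h3
    linarith
  have hmain : (2/5) * v ^ α ≤ ‖Zf m₀‖ := by
    rw [hZfdef]
    simp only
    rw [hi₀]
    exact main_term_lower hα0 hα1.le j₀ hv hl hu s t hvdef.symm
  have hRd : (2 * v ^ α) * ((1+d)/(1-d)) - 2 * v ^ α ≤ (4/99) * v ^ α := by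
    have h2 : 0 < 1 - d := by linarith
    have h6 : (1+d)/(1-d) - 1 ≤ 2/99 := by
      rw [div_sub_one h2.ne', div_le_div_iff₀ h2 (by norm_num)]
      nlinarith
    nlinarith
  have hDlow : (1/3) * v ^ α ≤ ‖ps s i₀ - ps t i₀‖ := by
    rw [hD i₀]
    have he : (∑' m : ℤ, (fj α (((i₀:ℕ):ℤ) + K*m) s - fj α (((i₀:ℕ):ℤ) + K*m) t))
        = Zf m₀ + R := hsplit
    rw [he]
    have h6 : ‖Zf m₀‖ ≤ ‖Zf m₀ + R‖ + ‖R‖ := by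
      have h7 : Zf m₀ = (Zf m₀ + R) + (-R) := by ring
      calc ‖Zf m₀‖ = ‖(Zf m₀ + R) + (-R)‖ := by rw [← h7]
        _ ≤ ‖Zf m₀ + R‖ + ‖-R‖ := norm_add_le _ _
        _ = ‖Zf m₀ + R‖ + ‖R‖ := by rw [norm_neg]
    linarith
  have hlb : (1/3) * v ^ α ≤ ‖T s - T t‖ := by
    rw [hnorm]
    have h1 : ‖ps s i₀ - ps t i₀‖^2 ≤ ∑ i : Fin K, ‖ps s i - ps t i‖^2 :=
      Finset.single_le_sum (f := fun i : Fin K => ‖ps s i - ps t i‖^2)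
        (fun i _ => sq_nonneg _) (Finset.mem_univ i₀)
    calc (1/3) * v ^ α ≤ ‖ps s i₀ - ps t i₀‖ := hDlow
      _ = Real.sqrt (‖ps s i₀ - ps t i₀‖^2) := (Real.sqrt_sq (norm_nonneg _)).symm
      _ ≤ Real.sqrt (∑ i : Fin K, ‖ps s i - ps t i‖^2) := Real.sqrt_le_sqrt h1
  constructor
  · have h1 : (1:ℝ)/A ≤ 1/3 := by
      apply one_div_le_one_div_of_le (by norm_num) hA3
    calc (1/A) * v ^ α ≤ (1/3) * v ^ α :=
          mul_le_mul_of_nonneg_right h1 hvap.le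
      _ ≤ ‖T s - T t‖ := hlb
  · exact hub


end HolderAux


/-- For every `α ∈ (0,1]`, the real line Hölder(`α`) embeds into some Euclidean space `ℝ^n`. -/
theorem real_holder_embeds_euclidean (α : ℝ) (hα0 : 0 < α) (hα1 : α ≤ 1) :
    ∃ (n : ℕ) (T : ℝ → EuclideanSpace ℝ (Fin n)) (A : ℝ), 0 < A ∧
      ∀ s t : ℝ,
        (1/A) * |s - t| ^ α ≤ ‖T s - T t‖ ∧ ‖T s - T t‖ ≤ A * |s - t| ^ α := by
  rcases eq_or_lt_of_le hα1 with heq | hlt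
  · -- α = 1 : the identity embedding into ℝ¹
    subst heq
    refine ⟨1, fun r => EuclideanSpace.single 0 r, 1, one_pos, ?_⟩
    intro s t
    have h1 : (EuclideanSpace.single (0 : Fin 1) s) - EuclideanSpace.single (0 : Fin 1) t
        = EuclideanSpace.single (0 : Fin 1) (s - t) := by
      ext i
      rw [PiLp.sub_apply]
      simp only [EuclideanSpace.single_apply]
      split_ifs <;> simp
    rw [h1, EuclideanSpace.norm_single, Real.rpow_one, Real.norm_eq_abs]
    constructor <;> norm_num
  · -- α < 1 : the snowflake embedding, reindexed to a `Fin n`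
    obtain ⟨K, T0, A, hA, hT⟩ := HolderAux.aux_embed hα0 hlt
    set n := Fintype.card (Fin K × Bool) with hn
    set e : (Fin K × Bool) ≃ Fin n := Fintype.equivFin _ with he
    set L := LinearIsometryEquiv.piLpCongrLeft 2 ℝ ℝ e with hL
    refine ⟨n, fun r => L (T0 r), A, hA, ?_⟩
    intro s t
    have h2 : L (T0 s) - L (T0 t) = L (T0 s - T0 t) := (map_sub L _ _).symm
    rw [h2, L.norm_map]
    exact hT s t
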